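/- If X and Y are T1 spaces and (pₙ)ₙ is a sequence of points pₙ = (xₙ, yₙ) ∈ X × Y such that xₙ ≠ xₘ and yₙ ≠ yₘ whenever n ≠ m, then the set P = {pₙ : n ∈ ℕ} is closed and discrete in the cross-topology on X × Y. -/

import Mathlib

open Set Filter Topology

def crossOpen {X Y : Type*} [TopologicalSpace X] [TopologicalSpace Y] (A : Set (X × Y)) : Prop :=
  ∀ p ∈ A, ∃ U ∈ nhds p.1, ∃ V ∈ nhds p.2, ({p.1} ×ˢ V) ∪ (U ×ˢ {p.2}) ⊆ A

def crossTopology (X Y : Type*) [TopologicalSpace X] [TopologicalSpace Y] :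
    TopologicalSpace (X × Y) where
  IsOpen := crossOpen
  isOpen_univ := fun p _ => ⟨Set.univ, Filter.univ_mem, Set.univ, Filter.univ_mem, Set.subset_univ _⟩
  isOpen_inter := by
    rintro A B hA hB p hp
    obtain ⟨U1, hU1, V1, hV1, h1⟩ := hA p hp.1
    obtain ⟨U2, hU2, V2, hV2, h2⟩ := hB p hp.2
    refine ⟨U1 ∩ U2, Filter.inter_mem hU1 hU2, V1 ∩ V2, Filter.inter_mem hV1 hV2, ?_⟩
    rintro q (hq | hq)
    · exact ⟨h1 (Or.inl ⟨hq.1, hq.2.1⟩), h2 (Or.inl ⟨hq.1, hq.2.2⟩)⟩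
    · exact ⟨h1 (Or.inr ⟨hq.1.1, hq.2⟩), h2 (Or.inr ⟨hq.1.2, hq.2⟩)⟩
  isOpen_sUnion := by
    rintro S hS p hp
    obtain ⟨A, hAS, hpA⟩ := hp
    obtain ⟨U, hU, V, hV, h⟩ := hS A hAS p hpA
    exact ⟨U, hU, V, hV, h.trans (Set.subset_sUnion_of_mem hAS)⟩

def crossSet {X Y : Type*} (E : Set (X × Y)) : Set (X × Y) :=
  {q | ∃ p ∈ E, q.1 = p.1 ∨ q.2 = p.2}


theorem key {X Y : Type*} [TopologicalSpace X] [TopologicalSpace Y]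
    [T1Space X] [T1Space Y] (p : ℕ → X × Y)
    (h1 : ∀ n m, n ≠ m → (p n).1 ≠ (p m).1) (h2 : ∀ n m, n ≠ m → (p n).2 ≠ (p m).2)
    (S : Set (X × Y)) (hS : S ⊆ Set.range p) : crossOpen Sᶜ := by
  intro q hq
  have hV : ∃ V ∈ nhds q.2, ∀ v ∈ V, (q.1, v) ∉ S := by
    by_cases h : ∃ v, (q.1, v) ∈ S
    · obtain ⟨b, hb⟩ := h
      have hbq : b ≠ q.2 := by
        rintro rfl
        exact hq hb
      refine ⟨{b}ᶜ, compl_singleton_mem_nhds (Ne.symm hbq), fun v hv hvS => ?_⟩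
      obtain ⟨n, hn⟩ := hS hvS
      obtain ⟨m, hm⟩ := hS hb
      have hnm : n = m := by
        by_contra hne
        exact h1 n m hne (by rw [hn, hm])
      apply hv
      have : (p n).2 = (p m).2 := by rw [hnm]
      rw [hn, hm] at this
      exact this
    · exact ⟨Set.univ, Filter.univ_mem, fun v _ hvS => h ⟨v, hvS⟩⟩
  have hU : ∃ U ∈ nhds q.1, ∀ u ∈ U, (u, q.2) ∉ S := by
    by_cases h : ∃ u, (u, q.2) ∈ S
    · obtain ⟨a, ha⟩ := h
      have haq : a ≠ q.1 := by
        rintro rfl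
        exact hq ha
      refine ⟨{a}ᶜ, compl_singleton_mem_nhds (Ne.symm haq), fun u hu huS => ?_⟩
      obtain ⟨n, hn⟩ := hS huS
      obtain ⟨m, hm⟩ := hS ha
      have hnm : n = m := by
        by_contra hne
        exact h2 n m hne (by rw [hn, hm])
      apply hu
      have : (p n).1 = (p m).1 := by rw [hnm]
      rw [hn, hm] at this
      exact this
    · exact ⟨Set.univ, Filter.univ_mem, fun u _ huS => h ⟨u, huS⟩⟩
  obtain ⟨V, hVn, hVg⟩ := hV
  obtain ⟨U, hUn, hUg⟩ := hU
  refine ⟨U, hUn, V, hVn, ?_⟩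
  rintro r (⟨hr1, hr2⟩ | ⟨hr1, hr2⟩)
  · have : r = (q.1, r.2) := Prod.ext hr1 rfl
    rw [this]
    exact hVg r.2 hr2
  · have : r = (r.1, q.2) := Prod.ext rfl hr2
    rw [this]
    exact hUg r.1 hr1
theorem range_closed_discrete {X Y : Type*} [TopologicalSpace X] [TopologicalSpace Y]
    [T1Space X] [T1Space Y] (p : ℕ → X × Y)
    (h1 : ∀ n m, n ≠ m → (p n).1 ≠ (p m).1) (h2 : ∀ n m, n ≠ m → (p n).2 ≠ (p m).2) :
    IsClosed[crossTopology X Y] (Set.range p) ∧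
      @DiscreteTopology (Set.range p)
        (TopologicalSpace.induced (Subtype.val) (crossTopology X Y)) := by
  constructor
  · exact @IsClosed.mk (X × Y) (crossTopology X Y) _ (key p h1 h2 _ subset_rfl)
  · rw [@discreteTopology_iff_isOpen_singleton]
    rintro ⟨q, hq⟩
    refine ⟨(Set.range p \ {q})ᶜ, key p h1 h2 _ Set.diff_subset, ?_⟩
    ext ⟨r, hr⟩
    simp only [Set.mem_preimage, Set.mem_compl_iff, Set.mem_diff, Set.mem_singleton_iff,
      not_and, not_not]
    constructor
    · intro h
      exact Subtype.ext (h hr)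
    · intro h _
      exact congrArg Subtype.val h
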